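/- If G' (c copies of G glued at v, with metric-completion edge-costs) has a Hamiltonian tour of cost at most cK, then G has a Hamiltonian tour of cost at most K. -/

import Mathlib

open List

namespace Stmt6Aux

variable {α β ι : Type*}

/-- Cost of the walk `a :: l ++ [b]` with respect to an edge-cost `f`. -/
noncomputable def chainCost (f : α → α → ℝ) : α → List α → α → ℝ
  | a, [], b => f a b
  | a, x :: xs, b => f a x + chainCost f x xs b

lemma chainCost_nil (f : α → α → ℝ) (a b : α) : chainCost f a [] b = f a b := rfl

lemma chainCost_cons (f : α → α → ℝ) (a x b : α) (xs : List α) :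
    chainCost f a (x :: xs) b = f a x + chainCost f x xs b := rfl

lemma chainCost_shortcut {f : α → α → ℝ}
    (htri : ∀ x y z, f x z ≤ f x y + f y z) :
    ∀ (l : List α) (a x b : α), chainCost f a l b ≤ f a x + chainCost f x l b
  | [], a, x, b => htri a x b
  | y :: ys, a, x, b => by
      rw [chainCost_cons, chainCost_cons, ← add_assoc]
      exact add_le_add_left (htri a x y) _

lemma chainCost_sublist {f : α → α → ℝ}
    (htri : ∀ x y z, f x z ≤ f x y + f y z) :
    ∀ {l₁ l₂ : List α}, l₁ <+ l₂ → ∀ a b, chainCost f a l₁ b ≤ chainCost f a l₂ b := by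
  intro l₁ l₂ h
  induction h with
  | slnil => intro a b; exact le_rfl
  | @cons l₁' l₂' x h ih =>
      intro a b
      calc chainCost f a l₁' b ≤ chainCost f a l₂' b := ih a b
        _ ≤ f a x + chainCost f x l₂' b := chainCost_shortcut htri _ a x b
        _ = chainCost f a (x :: l₂') b := (chainCost_cons ..).symm
  | @cons_cons l₁' l₂' x h ih =>
      intro a b
      rw [chainCost_cons, chainCost_cons]
      exact add_le_add_right (ih x b) _

lemma chainCost_sum (s : Finset ι) (f : ι → α → α → ℝ) :
    ∀ (l : List α) (a b : α),
      chainCost (fun p q => ∑ i ∈ s, f i p q) a l b = ∑ i ∈ s, chainCost (f i) a l b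
  | [], a, b => rfl
  | x :: xs, a, b => by
      simp only [chainCost_cons, chainCost_sum s f xs x b, Finset.sum_add_distrib]

lemma chainCost_map (f : β → β → ℝ) (g : α → β) :
    ∀ (l : List α) (a b : α),
      chainCost (fun p q => f (g p) (g q)) a l b = chainCost f (g a) (l.map g) (g b)
  | [], a, b => rfl
  | x :: xs, a, b => by
      simp only [chainCost_cons, chainCost_map f g xs x b, List.map_cons]

lemma sum_getElem_chain (f : α → α → ℝ) :
    ∀ (r : List α) (a b : α),
      ∑ i : Fin (a :: r).length,
        f ((a :: r)[(i : ℕ)]) (((a :: r) ++ [b])[(i : ℕ) + 1]'(by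
          have := i.isLt
          simp only [List.length_append, List.length_cons] at *
          omega)) = chainCost f a r b
  | [], a, b => by
      simp [chainCost_nil]
  | x :: xs, a, b => by
      simp only [List.length_cons]
      rw [Fin.sum_univ_succ]
      simp only [Fin.val_zero, Fin.val_succ, List.cons_append, List.getElem_cons_succ,
        List.getElem_cons_zero]
      rw [chainCost_cons]
      congr 1
      have := sum_getElem_chain f xs x b
      simp only [List.length_cons] at this
      convert this using 2
      simp [List.cons_append]

lemma sum_formPerm_chain [DecidableEq α] (f : α → α → ℝ) (a : α) (r : List α)
    (h : (a :: r).Nodup) :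
    ∑ x ∈ (a :: r).toFinset, f x ((a :: r).formPerm x) = chainCost f a r a := by
  rw [List.sum_toFinset _ h, ← Fin.sum_univ_fun_getElem (a :: r) (fun x => f x ((a :: r).formPerm x))]
  rw [← sum_getElem_chain f r a a]
  apply Finset.sum_congr rfl
  intro i _
  rw [List.formPerm_apply_getElem _ h i i.isLt]
  congr 1
  by_cases hi : (i : ℕ) + 1 < (a :: r).length
  · rw [List.getElem_append_left hi]
    simp only [Nat.mod_eq_of_lt hi]
  · have hlen : (i : ℕ) + 1 = (a :: r).length := by
      have := i.isLt; omega
    simp only [hlen, Nat.mod_self]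
    rw [List.getElem_concat_length rfl]
    simp

variable {V : Type*} [DecidableEq V] {c : ℕ}

/-- Projection of the glued graph onto copy `i`: vertices of copy `i` map to themselves,
everything else maps to the glued vertex `v`. -/
def proj (v : V) (i : Fin c) : (Unit ⊕ Fin c × {x : V // x ≠ v}) → V
  | Sum.inl _ => v
  | Sum.inr p => if p.1 = i then p.2.1 else v

@[simp] lemma proj_inl (v : V) (i : Fin c) (t : Unit) : proj v i (Sum.inl t) = v := rfl

@[simp] lemma proj_inr (v : V) (i j : Fin c) (x : {x : V // x ≠ v}) :
    proj v i (Sum.inr (j, x)) = if j = i then x.1 else v := rfl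

end Stmt6Aux

open Stmt6Aux

/-- If `G'` (the metric completion of `c` copies of `G` glued at `v`) has a Hamiltonian
tour of cost at most `c*K`, then `G` has a Hamiltonian tour of cost at most `K`.
Same encoding as in the forward direction: tours are cyclic permutations with full
support; `Sum.inl ()` is the glued vertex `v`; `K` is a positive integer. -/
theorem stmt_6 {V : Type*} [Fintype V] [DecidableEq V]
    (hcard : 3 ≤ Fintype.card V)
    (d : V → V → ℝ) (v : V)
    (hsym : ∀ x y : V, d x y = d y x)
    (hdiag : ∀ x : V, d x x = 0)
    (htri : ∀ x y z : V, d x z ≤ d x y + d y z)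
    (hval : ∀ x y : V, x ≠ y → d x y = 1 ∨ d x y = 2)
    (c : ℕ) (hc : 1 ≤ c)
    (D : (Unit ⊕ Fin c × {x : V // x ≠ v}) → (Unit ⊕ Fin c × {x : V // x ≠ v}) → ℝ)
    (hDuu : D (Sum.inl ()) (Sum.inl ()) = 0)
    (hDvx : ∀ p : Fin c × {x : V // x ≠ v}, D (Sum.inl ()) (Sum.inr p) = d v p.2.1)
    (hDxv : ∀ p : Fin c × {x : V // x ≠ v}, D (Sum.inr p) (Sum.inl ()) = d p.2.1 v)
    (hDsame : ∀ (i : Fin c) (x y : {x : V // x ≠ v}),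
      D (Sum.inr (i, x)) (Sum.inr (i, y)) = d x.1 y.1)
    (hDdiff : ∀ (i j : Fin c) (x y : {x : V // x ≠ v}), i ≠ j →
      D (Sum.inr (i, x)) (Sum.inr (j, y)) = d x.1 v + d v y.1)
    (K : ℕ) (hK : 0 < K)
    (τ : Equiv.Perm (Unit ⊕ Fin c × {x : V // x ≠ v}))
    (hτ : τ.IsCycle) (hτs : τ.support = Finset.univ)
    (hcost : ∑ p, D p (τ p) ≤ (c : ℝ) * K) :
    ∃ σ : Equiv.Perm V, σ.IsCycle ∧ σ.support = Finset.univ ∧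
      ∑ x : V, d x (σ x) ≤ (K : ℝ) := by
  classical
  -- the glued vertex
  set u : Unit ⊕ Fin c × {x : V // x ≠ v} := Sum.inl () with hudef
  have hu_mem : u ∈ τ.support := by rw [hτs]; exact Finset.mem_univ _
  have hu : τ u ≠ u := Equiv.Perm.mem_support.mp hu_mem
  -- the tour as a list starting at `u`
  have hLnd : (τ.toList u).Nodup := Equiv.Perm.nodup_toList τ u
  have hLmem : ∀ p, p ∈ τ.toList u := by
    intro p
    rw [Equiv.Perm.mem_toList_iff]
    refine ⟨?_, hu_mem⟩
    have hp : τ p ≠ p := Equiv.Perm.mem_support.mp (by rw [hτs]; exact Finset.mem_univ _)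
    exact hτ.sameCycle hu hp
  have hLne : τ.toList u ≠ [] := by
    intro h
    simpa [h] using hLmem u
  obtain ⟨a, r, har⟩ := List.exists_cons_of_ne_nil hLne
  have hlenpos : 0 < (τ.toList u).length := by rw [har]; simp
  have hzero : (τ.toList u)[0]? = some u := by
    rw [List.getElem?_eq_getElem hlenpos]
    have h := Equiv.Perm.toList_getElem_zero τ u hu_mem
    simpa [List.get_eq_getElem] using h
  rw [har] at hzero
  simp only [List.getElem?_cons_zero, Option.some.injEq] at hzero
  subst hzero
  have hform : (u :: r).formPerm = τ := by
    rw [← har, Equiv.Perm.formPerm_toList, hτ.cycleOf_eq hu]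
  rw [har] at hLnd hLmem
  have htf : (u :: r).toFinset = Finset.univ := by
    ext p
    simp only [List.mem_toFinset, Finset.mem_univ, iff_true]
    exact hLmem p
  -- total cost of the tour equals the chain cost of the list
  have hsum : ∑ p, D p (τ p) = chainCost D u r u := by
    rw [← sum_formPerm_chain D u r hLnd, htf, hform]
  -- splitting an edge cost into the projected costs
  have hsplit : ∀ p q, (∑ i : Fin c, d (proj v i p) (proj v i q)) = D p q := by
    intro p q
    match p, q with
    | Sum.inl _, Sum.inl _ => simp [hdiag, hDuu]; exact hDuu.symm
    | Sum.inl _, Sum.inr (j, y) =>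
        rw [hDvx]
        rw [Finset.sum_eq_single j]
        · simp
        · intro b _ hb
          simp [Ne.symm hb, hdiag]
        · simp
    | Sum.inr (j, x), Sum.inl _ =>
        rw [hDxv]
        rw [Finset.sum_eq_single j]
        · simp
        · intro b _ hb
          simp [Ne.symm hb, hdiag]
        · simp
    | Sum.inr (j, x), Sum.inr (k, y) =>
        by_cases hjk : j = k
        · subst hjk
          rw [hDsame]
          rw [Finset.sum_eq_single j]
          · simp
          · intro b _ hb
            simp [Ne.symm hb, hdiag]
          · simp
        · rw [hDdiff j k x y hjk]
          have hterm : ∀ i : Fin c, d (proj v i (Sum.inr (j, x))) (proj v i (Sum.inr (k, y)))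
              = (if i = j then d x.1 v else 0) + (if i = k then d v y.1 else 0) := by
            intro i
            rcases eq_or_ne i j with hij | hij
            · subst hij
              simp [hjk, Ne.symm hjk]
            · rcases eq_or_ne i k with hik | hik
              · subst hik
                simp [hij, Ne.symm hij]
              · simp [hij, hik, Ne.symm hij, Ne.symm hik, hdiag]
          rw [Finset.sum_congr rfl (fun i _ => hterm i), Finset.sum_add_distrib,
            Finset.sum_ite_eq', Finset.sum_ite_eq']
          simp
  -- split the chain cost among the copies
  have hDfun : (fun p q => ∑ i : Fin c, d (proj v i p) (proj v i q)) = D := by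
    funext p q; exact hsplit p q
  have hchain_split : chainCost D u r u
      = ∑ i : Fin c, chainCost (fun p q => d (proj v i p) (proj v i q)) u r u := by
    rw [← hDfun, chainCost_sum]
  -- pick a cheap copy
  haveI hcfin : Nonempty (Fin c) := ⟨⟨0, hc⟩⟩
  have hsumle : ∑ i : Fin c, chainCost (fun p q => d (proj v i p) (proj v i q)) u r u
      ≤ ∑ _i : Fin c, (K : ℝ) := by
    rw [← hchain_split, ← hsum]
    refine le_trans hcost ?_
    simp [Finset.sum_const, nsmul_eq_mul]
  obtain ⟨i, -, hi⟩ := Finset.exists_le_of_sum_le Finset.univ_nonempty hsumle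
  -- project the tour to copy `i`
  set M : List V := r.map (proj v i) with hM
  have hMchain : chainCost d v M v ≤ (K : ℝ) := by
    have := chainCost_map d (proj v i) r u u
    simp only [hudef, proj_inl] at this
    rw [hudef] at hi
    calc chainCost d v M v = chainCost (fun p q => d (proj v i p) (proj v i q))
          (Sum.inl ()) r (Sum.inl ()) := this.symm
      _ ≤ (K : ℝ) := hi
  -- shortcut: remove `v` and duplicates
  set M₁ : List V := (M.filter (fun x => x ≠ v)).dedup with hM₁
  have hM₁sub : M₁ <+ M := (List.dedup_sublist _).trans List.filter_sublist
  have hM₁chain : chainCost d v M₁ v ≤ chainCost d v M v :=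
    chainCost_sublist htri hM₁sub v v
  have hM₁nd : M₁.Nodup := List.nodup_dedup _
  have hvM₁ : v ∉ M₁ := by
    intro h
    have := List.of_mem_filter (List.mem_dedup.mp h)
    simp at this
  have hTnd : (v :: M₁).Nodup := List.nodup_cons.mpr ⟨hvM₁, hM₁nd⟩
  -- coverage
  have hTmem : ∀ x : V, x ∈ v :: M₁ := by
    intro x
    by_cases hx : x = v
    · subst hx; exact List.mem_cons_self
    · have hp : (Sum.inr (i, ⟨x, hx⟩) : Unit ⊕ Fin c × {x : V // x ≠ v}) ∈ u :: r :=
        hLmem _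
      have hpne : (Sum.inr (i, ⟨x, hx⟩) : Unit ⊕ Fin c × {x : V // x ≠ v}) ≠ u := by
        rw [hudef]; simp
      have hpr : (Sum.inr (i, ⟨x, hx⟩) : Unit ⊕ Fin c × {x : V // x ≠ v}) ∈ r := by
        rcases List.mem_cons.mp hp with h | h
        · exact absurd h hpne
        · exact h
      have hxM : x ∈ M := by
        rw [hM]
        refine List.mem_map.mpr ⟨_, hpr, ?_⟩
        simp
      have hxM₁ : x ∈ M₁ := by
        rw [hM₁, List.mem_dedup, List.mem_filter]
        exact ⟨hxM, by simp [hx]⟩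
      exact List.mem_cons_of_mem _ hxM₁
  have hTtf : (v :: M₁).toFinset = Finset.univ := by
    ext x
    simp only [List.mem_toFinset, Finset.mem_univ, iff_true]
    exact hTmem x
  -- length at least two
  obtain ⟨w, hw⟩ := Fintype.exists_ne_of_one_lt_card (by omega) v
  have hwM₁ : w ∈ M₁ := by
    rcases List.mem_cons.mp (hTmem w) with h | h
    · exact absurd h hw
    · exact h
  have hlen2 : 2 ≤ (v :: M₁).length := by
    have : 0 < M₁.length := List.length_pos_iff.mpr (List.ne_nil_of_mem hwM₁)
    simp only [List.length_cons]
    omega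
  -- build the tour of `G`
  refine ⟨(v :: M₁).formPerm, List.isCycle_formPerm hTnd hlen2, ?_, ?_⟩
  · rw [List.support_formPerm_of_nodup _ hTnd, hTtf]
    intro x hx
    rw [hx] at hlen2
    simp at hlen2
  · have hcosteq : ∑ x : V, d x ((v :: M₁).formPerm x) = chainCost d v M₁ v := by
      rw [← sum_formPerm_chain d v M₁ hTnd, hTtf]
    rw [hcosteq]
    exact le_trans hM₁chain hMchain
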